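/- arXiv:2106.14848 — 2 statements merged into one kernel-verified Lean document; each statement's English description precedes it below -/
import Mathlib

section
/- For every finite simple connected graph G of order n ≥ 2 and every positive integer k, γ_L^k(G) = 1 if and only if G is isomorphic to the path P_i for some i with 2 ≤ i ≤ k + 1. -/
open SimpleGraph Finset
lemma dist_iso {V W : Type*} {G : SimpleGraph V} {G' : SimpleGraph W}
    (hG : G.Connected) (φ : G ≃g G') (u v : V) :
    G'.dist (φ u) (φ v) = G.dist u v := by
  apply le_antisymm
  · obtain ⟨p, hp⟩ := hG.exists_walk_length_eq_dist u v
    calc G'.dist (φ u) (φ v) ≤ (p.map φ.toHom).length := SimpleGraph.dist_le _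
      _ = G.dist u v := by rw [Walk.length_map, hp]
  · have hr : G'.Reachable (φ u) (φ v) := (hG.preconnected u v).map φ.toHom
    obtain ⟨q, hq⟩ := hr.exists_walk_length_eq_dist
    have := SimpleGraph.dist_le (q.map φ.symm.toHom)
    simpa [Walk.length_map, hq] using this

lemma pg_walk {n : ℕ} (m : ℕ) : ∀ (a b : Fin n), a.val + m = b.val →
    ∃ p : (pathGraph n).Walk a b, p.length = m := by
  induction m with
  | zero => intro a b h; have : a = b := Fin.ext (by omega); subst this; exact ⟨Walk.nil, rfl⟩
  | succ m ih =>
    intro a b h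
    have ha1 : a.val + 1 < n := by omega
    let a' : Fin n := ⟨a.val + 1, ha1⟩
    have hadj : (pathGraph n).Adj a a' := pathGraph_adj.mpr (Or.inl rfl)
    obtain ⟨p, hp⟩ := ih a' b (by simp [a']; omega)
    exact ⟨Walk.cons hadj p, by simp [hp]⟩

lemma pg_lower {n : ℕ} {a b : Fin n} (p : (pathGraph n).Walk a b) :
    b.val ≤ a.val + p.length ∧ a.val ≤ b.val + p.length := by
  induction p with
  | nil => simp
  | cons h q ih =>
    have := pathGraph_adj.mp h
    simp only [Walk.length_cons]
    omega

lemma pg_dist0 {n : ℕ} (h0 : 0 < n) (a : Fin n) :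
    (pathGraph n).dist ⟨0, h0⟩ a = a.val := by
  obtain ⟨p, hp⟩ := pg_walk a.val ⟨0, h0⟩ a (by simp)
  apply le_antisymm
  · calc (pathGraph n).dist ⟨0, h0⟩ a ≤ p.length := SimpleGraph.dist_le _
      _ = a.val := hp
  · obtain ⟨q, hq⟩ := (Reachable.exists_walk_length_eq_dist ⟨p⟩)
    have := (pg_lower q).1
    simp only [Fin.val_mk] at this
    omega

lemma exists_adj_dist {V : Type*} {G : SimpleGraph V} (hG : G.Connected) {v z : V} {d : ℕ}
    (h : G.dist v z = d + 1) : ∃ w, G.Adj v w ∧ G.dist w z = d := by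
  obtain ⟨p, hp⟩ := hG.exists_walk_length_eq_dist v z
  cases p with
  | nil => rw [h] at hp; simp at hp
  | cons hadj q =>
    rename_i w
    refine ⟨w, hadj, ?_⟩
    have h1 : G.dist w z ≤ d := by
      have := SimpleGraph.dist_le q
      simp [Walk.length_cons, h] at hp
      omega
    have h2 : d ≤ G.dist w z := by
      have ht := hG.dist_triangle (u := v) (v := w) (w := z)
      rw [h, SimpleGraph.dist_eq_one_iff_adj.mpr hadj] at ht
      omega
    omega
open SimpleGraph Finset

/-- `D` is a distance-`k` dominating set of `G`: every vertex outside `D` is within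
distance `k` of some vertex of `D`. -/
def IsKDomSet {V : Type*} (G : SimpleGraph V) (k : ℕ) (D : Finset V) : Prop :=
  ∀ u : V, u ∉ D → ∃ w ∈ D, G.dist u w ≤ k

/-- `R` is a distance-`k` resolving set of `G`: any two distinct vertices are
distinguished by the truncated distance `d_k(x,y) = min (d(x,y)) (k+1)` to some vertex of `R`. -/
def IsKResSet {V : Type*} (G : SimpleGraph V) (k : ℕ) (R : Finset V) : Prop :=
  ∀ x y : V, x ≠ y → ∃ z ∈ R, min (G.dist x z) (k + 1) ≠ min (G.dist y z) (k + 1)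

/-- The distance-`k` domination number `γ_k(G)`. -/
noncomputable def kdom {V : Type*} (G : SimpleGraph V) (k : ℕ) : ℕ :=
  sInf {m : ℕ | ∃ D : Finset V, IsKDomSet G k D ∧ D.card = m}

/-- The distance-`k` dimension `dim_k(G)`. -/
noncomputable def kdim {V : Type*} (G : SimpleGraph V) (k : ℕ) : ℕ :=
  sInf {m : ℕ | ∃ R : Finset V, IsKResSet G k R ∧ R.card = m}

/-- The distance-`k` location-domination number `γ_L^k(G)`. -/
noncomputable def kld {V : Type*} (G : SimpleGraph V) (k : ℕ) : ℕ :=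
  sInf {m : ℕ | ∃ S : Finset V, IsKDomSet G k S ∧ IsKResSet G k S ∧ S.card = m}

/-- For every finite simple connected graph `G` of order `n ≥ 2` and positive integer `k`,
`γ_L^k(G) = 1` iff `G` is isomorphic to a path `P_i` with `2 ≤ i ≤ k + 1`. -/
theorem stmt_5 {V : Type*} [Fintype V] (G : SimpleGraph V) (hG : G.Connected)
    (hn : 2 ≤ Fintype.card V) (k : ℕ) (hk : 1 ≤ k) :
    kld G k = 1 ↔ ∃ i : ℕ, 2 ≤ i ∧ i ≤ k + 1 ∧ Nonempty (G ≃g pathGraph i) := by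
  constructor
  · intro h
    rw [kld] at h
    have hne : {m : ℕ | ∃ S : Finset V, IsKDomSet G k S ∧ IsKResSet G k S ∧ S.card = m}.Nonempty := by
      by_contra hc
      rw [Set.not_nonempty_iff_eq_empty] at hc
      rw [hc, Nat.sInf_empty] at h
      simp at h
    have hmem := Nat.sInf_mem hne
    rw [h] at hmem
    obtain ⟨S, hdom, hres, hcard⟩ := hmem
    obtain ⟨z, rfl⟩ := Finset.card_eq_one.mp hcard
    have hdle : ∀ u, G.dist u z ≤ k := by
      intro u
      by_cases hu : u = z
      · subst hu; simp [SimpleGraph.dist_self]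
      · obtain ⟨w, hw, hle⟩ := hdom u (by simp [hu])
        rw [Finset.mem_singleton] at hw
        subst hw; exact hle
    have hinj : Function.Injective (fun v => G.dist v z) := by
      intro x y hxy
      by_contra hxy'
      obtain ⟨w, hw, hne2⟩ := hres x y hxy'
      rw [Finset.mem_singleton] at hw
      subst hw
      simp only at hxy
      rw [min_eq_left ((hdle x).trans (by omega)), min_eq_left ((hdle y).trans (by omega))] at hne2
      exact hne2 hxy
    have hlt : ∀ v, G.dist v z < Fintype.card V := by
      intro v
      obtain ⟨p, hpath, hlen⟩ := hG.exists_path_of_dist v z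
      rw [← hlen]
      exact hpath.length_lt
    set n := Fintype.card V with hn'
    have hnk : n ≤ k + 1 := by
      have : Fintype.card V ≤ Fintype.card (Fin (k + 1)) :=
        Fintype.card_le_of_injective (fun v => (⟨G.dist v z, Nat.lt_succ_of_le (hdle v)⟩ : Fin (k + 1)))
          (fun x y hxy => hinj (by simpa using congrArg Fin.val hxy))
      simpa using this
    have hbij : Function.Bijective (fun v => (⟨G.dist v z, hlt v⟩ : Fin n)) := by
      rw [Fintype.bijective_iff_injective_and_card]
      exact ⟨fun x y hxy => hinj (by simpa using congrArg Fin.val hxy), by simp [hn']⟩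
    let e : V ≃ Fin n := Equiv.ofBijective _ hbij
    have he : ∀ v, (e v).val = G.dist v z := fun v => rfl
    refine ⟨n, hn, hnk, ⟨⟨e, ?_⟩⟩⟩
    intro a b
    rw [pathGraph_adj]
    simp only [he]
    constructor
    · rintro (hab | hab)
      · obtain ⟨w, hadj, hwd⟩ := exists_adj_dist hG hab.symm
        have : w = a := hinj (by simpa using hwd)
        subst this
        exact hadj.symm
      · obtain ⟨w, hadj, hwd⟩ := exists_adj_dist hG hab.symm
        have : w = b := hinj (by simpa using hwd)
        subst this
        exact hadj
    · intro hadj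
      have h1 : G.dist a z ≤ 1 + G.dist b z := by
        have := hG.dist_triangle (u := a) (v := b) (w := z)
        rwa [SimpleGraph.dist_eq_one_iff_adj.mpr hadj] at this
      have h2 : G.dist b z ≤ 1 + G.dist a z := by
        have := hG.dist_triangle (u := b) (v := a) (w := z)
        rwa [SimpleGraph.dist_eq_one_iff_adj.mpr hadj.symm] at this
      have h3 : G.dist a z ≠ G.dist b z := fun hh => hadj.ne (hinj hh)
      omega
  · rintro ⟨i, h2, hik, ⟨φ⟩⟩
    have h0 : 0 < i := by omega
    set z := φ.symm ⟨0, h0⟩ with hz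
    have hφz : φ z = ⟨0, h0⟩ := φ.apply_symm_apply _
    have hdist : ∀ u, G.dist u z = (φ u).val := by
      intro u
      rw [← dist_iso hG φ u z, hφz, SimpleGraph.dist_comm, pg_dist0]
    have hdle : ∀ u, G.dist u z ≤ k := by
      intro u
      rw [hdist u]
      have := (φ u).isLt
      omega
    have hdom : IsKDomSet G k {z} := fun u _ => ⟨z, Finset.mem_singleton_self z, hdle u⟩
    have hres : IsKResSet G k {z} := by
      intro x y hxy
      refine ⟨z, Finset.mem_singleton_self z, ?_⟩
      rw [min_eq_left ((hdle x).trans (by omega)), min_eq_left ((hdle y).trans (by omega)),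
        hdist x, hdist y]
      intro hh
      exact hxy (φ.injective (Fin.ext hh))
    have h1mem : 1 ∈ {m : ℕ | ∃ S : Finset V, IsKDomSet G k S ∧ IsKResSet G k S ∧ S.card = m} :=
      ⟨{z}, hdom, hres, Finset.card_singleton z⟩
    have h0nmem : 0 ∉ {m : ℕ | ∃ S : Finset V, IsKDomSet G k S ∧ IsKResSet G k S ∧ S.card = m} := by
      rintro ⟨S, _, hres0, hcard0⟩
      rw [Finset.card_eq_zero] at hcard0
      subst hcard0
      obtain ⟨x, y, hxy⟩ := Fintype.exists_pair_of_one_lt_card (by omega : 1 < Fintype.card V)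
      obtain ⟨w, hw, -⟩ := hres0 x y hxy
      simp at hw
    rw [kld]
    have hle := Nat.sInf_le h1mem
    have hge : sInf {m : ℕ | ∃ S : Finset V, IsKDomSet G k S ∧ IsKResSet G k S ∧ S.card = m} ≠ 0 := by
      intro hh
      rcases Nat.sInf_eq_zero.mp hh with h' | h'
      · exact h0nmem h'
      · rw [h'] at h1mem; exact h1mem
    omega
end

section
/- For every positive integer k and every positive integer N, there exists a finite simple connected graph G (with at least 2 vertices) such that γ_L^k(G) − γ_k(G) ≥ N. -/
open SimpleGraph Finset

/-- The star graph on `Fin (n+3)` with center `0`. -/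
def starG (n : ℕ) : SimpleGraph (Fin (n + 3)) :=
  SimpleGraph.fromRel (fun x _ => x = 0)

lemma starG_adj {n : ℕ} {x y : Fin (n + 3)} :
    (starG n).Adj x y ↔ x ≠ y ∧ (x = 0 ∨ y = 0) := Iff.rfl

lemma starG_adj_center {n : ℕ} {x : Fin (n + 3)} (hx : x ≠ 0) :
    (starG n).Adj x 0 := ⟨hx, Or.inr rfl⟩

lemma starG_reachable_center {n : ℕ} (x : Fin (n + 3)) :
    (starG n).Reachable x 0 := by
  by_cases hx : x = 0
  · subst hx; exact Reachable.refl 0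
  · exact (starG_adj_center hx).reachable

lemma starG_connected (n : ℕ) : (starG n).Connected := by
  rw [connected_iff]
  refine ⟨fun x y => ?_, ⟨0⟩⟩
  exact (starG_reachable_center x).trans (starG_reachable_center y).symm

lemma starG_dist_center {n : ℕ} {x : Fin (n + 3)} (hx : x ≠ 0) :
    (starG n).dist x 0 = 1 :=
  (SimpleGraph.dist_eq_one_iff_adj).mpr (starG_adj_center hx)

lemma starG_dist_leaves {n : ℕ} {x y : Fin (n + 3)} (hx : x ≠ 0) (hy : y ≠ 0)
    (hxy : x ≠ y) : (starG n).dist x y = 2 := by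
  have h1 : (starG n).dist x y ≤ 2 := by
    have := (starG_connected n).dist_triangle (u := x) (v := 0) (w := y)
    have h2 : (starG n).dist 0 y = 1 := by
      rw [SimpleGraph.dist_comm]; exact starG_dist_center hy
    rw [starG_dist_center hx, h2] at this
    omega
  have h0 : 0 < (starG n).dist x y := (starG_connected n).pos_dist_of_ne hxy
  have hne1 : (starG n).dist x y ≠ 1 := by
    intro h
    rcases (SimpleGraph.dist_eq_one_iff_adj.mp h) with ⟨-, h | h⟩
    · exact hx h
    · exact hy h
  omega

/-- two distinct leaves are at equal distance to any third vertex -/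
lemma starG_dist_eq {n : ℕ} {x y z : Fin (n + 3)} (hx : x ≠ 0) (hy : y ≠ 0)
    (hzx : z ≠ x) (hzy : z ≠ y) : (starG n).dist x z = (starG n).dist y z := by
  by_cases hz : z = 0
  · subst hz; rw [starG_dist_center hx, starG_dist_center hy]
  · rw [starG_dist_leaves hx hz (Ne.symm hzx), starG_dist_leaves hy hz (Ne.symm hzy)]

/-- For every positive integer `k` and every positive integer `N`, there is a finite
simple connected graph `G` (with at least 2 vertices) with `γ_L^k(G) - γ_k(G) ≥ N`. -/
theorem stmt_9 (k : ℕ) (hk : 1 ≤ k) (N : ℕ) (hN : 1 ≤ N) :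
    ∃ (n : ℕ) (G : SimpleGraph (Fin n)), 2 ≤ n ∧ G.Connected ∧
      kdom G k + N ≤ kld G k := by
  refine ⟨N + 3, starG N, by omega, starG_connected N, ?_⟩
  have hdom : kdom (starG N) k ≤ 1 := by
    apply Nat.sInf_le
    refine ⟨{0}, ?_, by simp⟩
    intro u hu
    refine ⟨0, by simp, ?_⟩
    rw [starG_dist_center (by simpa using hu)]
    exact hk
  have hld : N + 1 ≤ kld (starG N) k := by
    apply le_csInf
    · refine ⟨(N + 3 : ℕ), Finset.univ, ?_, ?_, by simp⟩
      · intro u hu; exact absurd (Finset.mem_univ u) hu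
      · intro x y hxy
        refine ⟨x, Finset.mem_univ x, ?_⟩
        have h0 : (starG N).dist x x = 0 := SimpleGraph.dist_self
        have hpos : 0 < (starG N).dist y x :=
          (starG_connected N).pos_dist_of_ne (Ne.symm hxy)
        rw [h0]
        simp only [Nat.zero_min]
        omega
    · rintro m ⟨S, hSdom, hSres, rfl⟩
      set L : Finset (Fin (N + 3)) := Finset.univ.erase 0 with hL
      have hcardL : L.card = N + 2 := by
        rw [hL, Finset.card_erase_of_mem (Finset.mem_univ 0), Finset.card_univ]
        simp
      have hsub : (L \ S).card ≤ 1 := by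
        rw [Finset.card_le_one]
        intro a ha b hb
        by_contra hab
        rcases hSres a b hab with ⟨z, hzS, hzne⟩
        rcases Finset.mem_sdiff.mp ha with ⟨haL, haS⟩
        rcases Finset.mem_sdiff.mp hb with ⟨hbL, hbS⟩
        have ha0 : a ≠ 0 := (Finset.mem_erase.mp haL).1
        have hb0 : b ≠ 0 := (Finset.mem_erase.mp hbL).1
        have hza : z ≠ a := fun h => haS (h ▸ hzS)
        have hzb : z ≠ b := fun h => hbS (h ▸ hzS)
        exact hzne (by rw [starG_dist_eq ha0 hb0 hza hzb])
      have hsplit : (L \ S).card + (L ∩ S).card = L.card :=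
        Finset.card_sdiff_add_card_inter L S
      have hinter : (L ∩ S).card ≤ S.card :=
        Finset.card_le_card Finset.inter_subset_right
      omega
  omega
end
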